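/- For integers c_1 ≥ 1 and c_2, …, c_k ≥ 2, the left q-deformed negative continued fraction equals the quotient of left q-deformed Euler continuants: [[c_1,…,c_k]]^♭_q = E^♭_k(c_1,…,c_k)_q / E^♭_{k−1}(c_2,…,c_k)_q in ℚ(q). In particular, the left q-deformed rational number [[c_1,…,c_k]]^♭_q has numerator R^♭(q) = E^♭_k(c_1,…,c_k)_q and denominator S^♭(q) = E^♭_{k−1}(c_2,…,c_k)_q. -/

import Mathlib

noncomputable section

/-- The field ℚ(q) of rational functions over ℚ. -/
abbrev K : Type := RatFunc ℚ

/-- The variable q. -/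
def q : K := RatFunc.X

/-- Right q-integer `[n]^♯` with deformation parameter `x`. -/
def qsX (x : K) (n : ℤ) : K := (1 - x ^ n) / (1 - x)

/-- Left q-integer `[n]^♭` with deformation parameter `x`. -/
def qfX (x : K) (n : ℤ) : K := (1 - x ^ (n - 1) + x ^ n - x ^ (n + 1)) / (1 - x)

/-- Right q-integer `[n]^♯_q`. -/
def qs (n : ℤ) : K := qsX q n

/-- Left q-integer `[n]^♭_q`. -/
def qf (n : ℤ) : K := qfX q n

/-- Right q-deformed Euler continuant `E^♯` (first-row expansion of the
tridiagonal determinant), with parameter `x`. -/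
def EsharpX (x : K) : List ℤ → K
  | [] => 1
  | [c] => qsX x c
  | c :: d :: rest => qsX x c * EsharpX x (d :: rest) - x ^ (c - 1) * EsharpX x rest

/-- Left q-deformed Euler continuant `E^♭` (first-row expansion of the
tridiagonal determinant whose (k,k) entry is the left q-integer), with parameter `x`. -/
def EflatX (x : K) : List ℤ → K
  | [] => 1
  | [c] => qfX x c
  | c :: d :: rest => qsX x c * EflatX x (d :: rest) - x ^ (c - 1) * EflatX x rest

def Esharp (L : List ℤ) : K := EsharpX q L

def Eflat (L : List ℤ) : K := EflatX q L

/-- `E^♯_{j-1}(d_2,…,d_j)` for the input list `(d_1,…,d_j)`, with the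
convention `E^♯_{-1}() = 0` when the list is empty. -/
def EsharpD : List ℤ → K
  | [] => 0
  | _ :: rest => Esharp rest

/-- `E^♭_{j-1}(d_2,…,d_j)` for the input list `(d_1,…,d_j)`, with the
convention `E^♭_{-1}() = 1 - q` when the list is empty. -/
def EflatD : List ℤ → K
  | [] => 1 - q
  | _ :: rest => Eflat rest

/-- Left q-deformed negative continued fraction `[[c_1,…,c_k]]^♭_q`. -/
def nflat : List ℤ → K
  | [] => 0
  | [c] => qf c
  | c :: d :: rest => qs c - q ^ (c - 1) / nflat (d :: rest)

/-- Right q-deformed negative continued fraction `[[c_1,…,c_k]]^♯_q`. -/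
def nsharp : List ℤ → K
  | [] => 0
  | [c] => qs c
  | c :: d :: rest => qs c - q ^ (c - 1) / nsharp (d :: rest)

/-- Left q-deformed regular continued fraction, with alternating parameter `x`, `x⁻¹`. -/
def regFlatX : K → List ℤ → K
  | _, [] => 0
  | x, [a] => qfX x a
  | x, a :: d :: rest => qsX x a + x ^ a / regFlatX x⁻¹ (d :: rest)

/-- Left q-deformed regular continued fraction `[a_1,…,a_{2m}]^♭_q`. -/
def regFlat (L : List ℤ) : K := regFlatX q L

/-- Classical negative continued fraction `[[c_1,…,c_k]] ∈ ℚ`. -/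
def negCF : List ℤ → ℚ
  | [] => 0
  | [c] => c
  | c :: d :: rest => c - 1 / negCF (d :: rest)

/-- Classical regular continued fraction `[a_1,…,a_{2m}] ∈ ℚ`. -/
def regCF : List ℤ → ℚ
  | [] => 0
  | [a] => a
  | a :: d :: rest => a + 1 / regCF (d :: rest)

/-- The matrix σ_{1,q} as an invertible 2×2 matrix over ℚ(q). -/
def σ1 : (Matrix (Fin 2) (Fin 2) K)ˣ where
  val := !![q⁻¹, -q⁻¹; 0, 1]
  inv := !![q, 1; 0, 1]
  val_inv := by
    have hq : (q : K) ≠ 0 := RatFunc.X_ne_zero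
    ext i j
    fin_cases i <;> fin_cases j <;>
      simp [Matrix.mul_apply, Fin.sum_univ_two, inv_mul_cancel₀ hq]
  inv_val := by
    have hq : (q : K) ≠ 0 := RatFunc.X_ne_zero
    ext i j
    fin_cases i <;> fin_cases j <;>
      simp [Matrix.mul_apply, Fin.sum_univ_two, mul_inv_cancel₀ hq]

/-- The matrix σ_{2,q} as an invertible 2×2 matrix over ℚ(q). -/
def σ2 : (Matrix (Fin 2) (Fin 2) K)ˣ where
  val := !![1, 0; 1, q⁻¹]
  inv := !![1, 0; -q, q]
  val_inv := by
    have hq : (q : K) ≠ 0 := RatFunc.X_ne_zero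
    ext i j
    fin_cases i <;> fin_cases j <;>
      simp [Matrix.mul_apply, Fin.sum_univ_two, inv_mul_cancel₀ hq]
  inv_val := by
    have hq : (q : K) ≠ 0 := RatFunc.X_ne_zero
    ext i j
    fin_cases i <;> fin_cases j <;>
      simp [Matrix.mul_apply, Fin.sum_univ_two, mul_inv_cancel₀ hq]

/-- The matrix S_q as an invertible 2×2 matrix over ℚ(q). -/
def Sq : (Matrix (Fin 2) (Fin 2) K)ˣ where
  val := !![0, -q⁻¹; 1, 0]
  inv := !![0, 1; -q, 0]
  val_inv := by
    have hq : (q : K) ≠ 0 := RatFunc.X_ne_zero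
    ext i j
    fin_cases i <;> fin_cases j <;>
      simp [Matrix.mul_apply, Fin.sum_univ_two, inv_mul_cancel₀ hq]
  inv_val := by
    have hq : (q : K) ≠ 0 := RatFunc.X_ne_zero
    ext i j
    fin_cases i <;> fin_cases j <;>
      simp [Matrix.mul_apply, Fin.sum_univ_two, mul_inv_cancel₀ hq]

/-- The product σ_{1,q}^{-c_1}·S_q·σ_{1,q}^{-c_2}·S_q⋯σ_{1,q}^{-c_k}·S_q. -/
def prodCS : List ℤ → (Matrix (Fin 2) (Fin 2) K)ˣ
  | [] => 1
  | c :: rest => σ1 ^ (-c) * Sq * prodCS rest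

/-- The product σ_{1,q}^{-a_1}·σ_{2,q}^{a_2}⋯σ_{1,q}^{-a_{2m-1}}·σ_{2,q}^{a_{2m}}. -/
def prodReg : List ℤ → (Matrix (Fin 2) (Fin 2) K)ˣ
  | [] => 1
  | [a] => σ1 ^ (-a)
  | a :: b :: rest => σ1 ^ (-a) * σ2 ^ b * prodReg rest

/-- The sum a_2 + a_4 + ⋯ of the even-indexed entries. -/
def evenSum : List ℤ → ℤ
  | [] => 0
  | [_] => 0
  | _ :: b :: rest => b + evenSum rest

/-- Möbius action of a 2×2 matrix on ℚ(q). -/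
def mobius (A : Matrix (Fin 2) (Fin 2) K) (x : K) : K :=
  (A 0 0 * x + A 0 1) / (A 1 0 * x + A 1 1)

open Polynomial

/-- Polynomial version of the right q-integer. -/
def sharpP (c : ℤ) : ℚ[X] := ∑ i ∈ Finset.range c.toNat, X ^ i

/-- Polynomial version of the left q-integer. -/
def flatP (c : ℤ) : ℚ[X] := sharpP (c - 1) + X ^ c.toNat

/-- Polynomial version of the left continuant. -/
def EP : List ℤ → ℚ[X]
  | [] => 1
  | [c] => flatP c
  | c :: d :: rest => sharpP c * EP (d :: rest) - X ^ (c - 1).toNat * EP rest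

lemma one_sub_q_ne_zero : (1 : K) - q ≠ 0 := by
  intro h
  have h' : (algebraMap ℚ[X] K) (1 - Polynomial.X) = 0 := by
    simpa [map_sub, q, RatFunc.algebraMap_X] using h
  rw [FaithfulSMul.algebraMap_eq_zero_iff] at h'
  have := congrArg (fun p => p.coeff 1) h'
  norm_num [Polynomial.coeff_one, Polynomial.coeff_X] at this

lemma zpow_toNat (c : ℤ) (hc : 0 ≤ c) : q ^ c = q ^ c.toNat := by
  obtain ⟨n, hn⟩ : ∃ n : ℕ, c = (n : ℤ) := ⟨c.toNat, (Int.toNat_of_nonneg hc).symm⟩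
  subst hn
  simp [zpow_natCast]

lemma qs_eq_alg (c : ℤ) (hc : 0 ≤ c) :
    qsX q c = algebraMap ℚ[X] K (sharpP c) := by
  have hx : algebraMap ℚ[X] K Polynomial.X = q := RatFunc.algebraMap_X
  rw [qsX, zpow_toNat c hc, sharpP, map_sum]
  simp only [map_pow, hx]
  rw [eq_comm, eq_div_iff one_sub_q_ne_zero]
  linear_combination -geom_sum_mul q c.toNat

lemma qf_eq_alg (c : ℤ) (hc : 1 ≤ c) :
    qfX q c = algebraMap ℚ[X] K (flatP c) := by
  have h1 : qfX q c = qsX q (c - 1) + q ^ c := by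
    rw [qfX, qsX]
    obtain ⟨m, hm⟩ : ∃ m : ℕ, c - 1 = (m : ℤ) :=
      ⟨(c - 1).toNat, (Int.toNat_of_nonneg (by omega)).symm⟩
    have hc' : c = (m : ℤ) + 1 := by omega
    have hc'' : c + 1 = ((m + 2 : ℕ) : ℤ) := by push_cast; omega
    have hcm : c = ((m + 1 : ℕ) : ℤ) := by push_cast; omega
    rw [hm, zpow_natCast]
    rw [hc'', zpow_natCast]
    rw [hcm, zpow_natCast]
    have h0 := one_sub_q_ne_zero
    field_simp
    ring
  have hx : algebraMap ℚ[X] K Polynomial.X = q := RatFunc.algebraMap_X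
  rw [h1, flatP, map_add, qs_eq_alg (c - 1) (by omega), map_pow,
    hx, zpow_toNat c (by omega)]

lemma Eflat_eq_alg : ∀ L : List ℤ, (∀ x ∈ L, 1 ≤ x) →
    Eflat L = algebraMap ℚ[X] K (EP L)
  | [], _ => by simp [Eflat, EflatX, EP]
  | [c], h => by
    simp only [Eflat, EflatX, EP]
    exact qf_eq_alg c (h c (by simp))
  | c :: d :: rest, h => by
    have hc : 1 ≤ c := h c (by simp)
    have h1 := Eflat_eq_alg (d :: rest) (fun x hx => h x (by simp [hx]))
    have h2 := Eflat_eq_alg rest (fun x hx => h x (by simp [hx]))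
    simp only [Eflat, EflatX, EP] at *
    have hx : algebraMap ℚ[X] K Polynomial.X = q := RatFunc.algebraMap_X
    rw [h1, h2, qs_eq_alg c (by omega), zpow_toNat (c - 1) (by omega)]
    rw [map_sub, map_mul, map_mul, map_pow, hx]

lemma sharpP_coeff_zero (c : ℤ) (hc : 1 ≤ c) : (sharpP c).coeff 0 = 1 := by
  rw [sharpP, Polynomial.finset_sum_coeff]
  simp only [Polynomial.coeff_X_pow]
  rw [Finset.sum_ite_eq, if_pos (Finset.mem_range.mpr (by omega))]

lemma flatP_coeff_zero (c : ℤ) (hc : 2 ≤ c) : (flatP c).coeff 0 = 1 := by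
  rw [flatP, Polynomial.coeff_add, sharpP_coeff_zero (c - 1) (by omega),
    Polynomial.coeff_X_pow]
  have h0 : ¬(0 = c.toNat) := by omega
  simp [h0]

lemma EP_coeff_zero : ∀ L : List ℤ, (∀ x ∈ L, 2 ≤ x) → (EP L).coeff 0 = 1
  | [], _ => by simp [EP]
  | [c], h => by
    simp only [EP]
    exact flatP_coeff_zero c (h c (by simp))
  | c :: d :: rest, h => by
    have hc : 2 ≤ c := h c (by simp)
    have h1 := EP_coeff_zero (d :: rest) (fun x hx => h x (by simp [hx]))
    have h2 := EP_coeff_zero rest (fun x hx => h x (by simp [hx]))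
    simp only [EP, Polynomial.coeff_sub, Polynomial.mul_coeff_zero, h1, h2,
      sharpP_coeff_zero c (by omega), Polynomial.coeff_X_pow]
    have h0 : ¬(0 = (c - 1).toNat) := by omega
    simp only [if_neg h0]
    ring

lemma Eflat_ne_zero (L : List ℤ) (h : ∀ x ∈ L, 2 ≤ x) : Eflat L ≠ 0 := by
  rw [Eflat_eq_alg L (fun x hx => by have := h x hx; omega)]
  rw [Ne, FaithfulSMul.algebraMap_eq_zero_iff]
  intro h0
  have := EP_coeff_zero L h
  rw [h0] at this
  simp at this

lemma nflat_aux : ∀ (cs : List ℤ) (c1 : ℤ), 1 ≤ c1 → (∀ x ∈ cs, 2 ≤ x) →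
    nflat (c1 :: cs) = Eflat (c1 :: cs) / Eflat cs
  | [], c1, _, _ => by simp [nflat, Eflat, EflatX, qf]
  | d :: rest, c1, hc1, hcs => by
    have hd : 2 ≤ d := hcs d (by simp)
    have hrest : ∀ x ∈ rest, 2 ≤ x := fun x hx => hcs x (by simp [hx])
    have ih := nflat_aux rest d (by omega) hrest
    have hE1 : Eflat (d :: rest) ≠ 0 := Eflat_ne_zero _ hcs
    have hE0 : Eflat rest ≠ 0 := Eflat_ne_zero _ hrest
    show qs c1 - q ^ (c1 - 1) / nflat (d :: rest) = _
    rw [ih]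
    have hrec : Eflat (c1 :: d :: rest) =
        qsX q c1 * Eflat (d :: rest) - q ^ (c1 - 1) * Eflat rest := rfl
    rw [hrec]
    rw [qs]
    field_simp

/-- the left q-deformed negative continued fraction is the quotient of
left q-deformed Euler continuants. -/
theorem nflat_eq_Eflat_div (c1 : ℤ) (cs : List ℤ)
    (hc1 : 1 ≤ c1) (hcs : ∀ x ∈ cs, 2 ≤ x) :
    nflat (c1 :: cs) = Eflat (c1 :: cs) / Eflat cs :=
  nflat_aux cs c1 hc1 hcs
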